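/- In a two-node network with parallel arcs and affine per-unit cost functions l_a(m) = b_a m + d_a (b_a > 0, d_a ≥ 0), for an atomic splittable player j of weight m^j with cost u^j(z) = Σ_a x^j_a (b_a f_a(z) + d_a), where f_a(z) = Σ_i m^i x^i_a is the aggregate flow, the function W(z) = −(1/2) Σ_a b_a [f_a(z)² + Σ_{j} (m^j x^j_a)²] − Σ_a d_a f_a(z) satisfies ∂W/∂x^j_a = −m^j ∂u^j/∂x^j_a for every arc a. -/

import Mathlib

theorem stmt_19 {I A : Type*} [Fintype I] [DecidableEq I] [Fintype A] [DecidableEq A]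
    (m : I → ℝ) (hm : ∀ i, 0 < m i)
    (b dd : A → ℝ) (hb : ∀ a, 0 < b a) (hd : ∀ a, 0 ≤ dd a)
    (f : A → (I → A → ℝ) → ℝ)
    (hf : ∀ a x, f a x = ∑ i, m i * x i a)
    (u : I → (I → A → ℝ) → ℝ)
    (hu : ∀ j x, u j x = ∑ a, x j a * (b a * f a x + dd a))
    (W : (I → A → ℝ) → ℝ)
    (hW : ∀ x, W x = -(1 / 2) * (∑ a, b a * ((f a x) ^ 2 + ∑ j, (m j * x j a) ^ 2))
      - ∑ a, dd a * f a x) :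
    ∀ (j : I) (a : A) (x : I → A → ℝ),
      fderiv ℝ W x (Pi.single j (Pi.single a (1 : ℝ))) =
        - m j * fderiv ℝ (u j) x (Pi.single j (Pi.single a (1 : ℝ))) := by
  classical
  intro j a x
  set v : I → A → ℝ := Pi.single j (Pi.single a (1 : ℝ)) with hv
  -- coordinate functionals
  set ev : I → A → ((I → A → ℝ) →L[ℝ] ℝ) :=
    fun i a' => (ContinuousLinearMap.proj a' : (A → ℝ) →L[ℝ] ℝ).comp
      (ContinuousLinearMap.proj i : (I → A → ℝ) →L[ℝ] (A → ℝ)) with hevdef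
  have hev : ∀ i a' (y : I → A → ℝ), ev i a' y = y i a' := fun _ _ _ => rfl
  set F : A → ((I → A → ℝ) →L[ℝ] ℝ) := fun a' => ∑ i, m i • ev i a' with hFdef
  have hFa : ∀ a' (y : I → A → ℝ), F a' y = ∑ i, m i * y i a' := by
    intro a' y
    simp [hFdef, ContinuousLinearMap.sum_apply, hev]
  have hfd : ∀ (a' : A), HasFDerivAt (f a') (F a') x := by
    intro a'
    have : f a' = ⇑(F a') := funext fun y => by rw [hf, hFa]
    rw [this]; exact (F a').hasFDerivAt
  -- derivative of W
  have hWd : HasFDerivAt W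
      ((-(1/2 : ℝ)) • (∑ a', b a' • ((f a' x • F a' + f a' x • F a')
          + ∑ j', ((m j' * x j' a') • (m j' • ev j' a')
              + (m j' * x j' a') • (m j' • ev j' a'))))
        - ∑ a', dd a' • F a') x := by
    have hWeq : W = fun y => -(1 / 2) * (∑ a', b a' * ((f a' y) * f a' y
        + ∑ j', (m j' * y j' a') * (m j' * y j' a'))) - ∑ a', dd a' * f a' y := by
      funext y; rw [hW]; simp only [pow_two]
    rw [hWeq]
    apply HasFDerivAt.sub
    · apply HasFDerivAt.const_mul
      apply HasFDerivAt.fun_sum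
      intro a' _
      apply HasFDerivAt.const_mul
      apply HasFDerivAt.add
      · exact (hfd a').mul (hfd a')
      · apply HasFDerivAt.fun_sum
        intro j' _
        have hcoord : HasFDerivAt (fun y : I → A → ℝ => m j' * y j' a')
            (m j' • ev j' a') x := by
          have : (fun y : I → A → ℝ => m j' * y j' a') = ⇑(m j' • ev j' a') := by
            funext y; simp [hev]
          rw [this]; exact (m j' • ev j' a').hasFDerivAt
        exact hcoord.mul hcoord
    · apply HasFDerivAt.fun_sum
      intro a' _
      exact (hfd a').const_mul (dd a')
  -- derivative of u j
  have hud : HasFDerivAt (u j)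
      (∑ a', (x j a' • (b a' • F a') + (b a' * f a' x + dd a') • ev j a')) x := by
    have hueq : u j = fun y => ∑ a', y j a' * (b a' * f a' y + dd a') := by
      funext y; rw [hu]
    rw [hueq]
    apply HasFDerivAt.fun_sum
    intro a' _
    have hcoord : HasFDerivAt (fun y : I → A → ℝ => y j a') (ev j a') x := by
      exact (ev j a').hasFDerivAt
    exact hcoord.mul (((hfd a').const_mul (b a')).add_const (dd a'))
  rw [hWd.fderiv, hud.fderiv]
  -- evaluate
  have hevv : ∀ i a', ev i a' v = (if i = j then (if a' = a then (1:ℝ) else 0) else 0) := by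
    intro i a'
    simp [hev, hv, Pi.single_apply, apply_ite (fun (g : A → ℝ) => g a')]
  have hFv : ∀ a', F a' v = (if a' = a then m j else 0) := by
    intro a'
    rw [hFa]
    simp [hv, Pi.single_apply, apply_ite (fun (g : A → ℝ) => g a'), mul_ite,
      Finset.sum_ite_eq', Finset.mem_univ]
  simp only [ContinuousLinearMap.sub_apply, ContinuousLinearMap.smul_apply,
    ContinuousLinearMap.sum_apply, ContinuousLinearMap.add_apply, smul_eq_mul, hevv, hFv]
  simp [mul_ite, ite_mul, mul_zero, zero_mul, mul_one, Finset.sum_ite_eq',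
    Finset.mem_univ, if_true, mul_add, Finset.sum_add_distrib]
  ring
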